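/- Let ε ∈ {1,−1}. The following hold for Laurent polynomials over ℂ. (1) If u has symmetry with type ε z^c and c is even, then the coset u^{[0]} has symmetry with type ε z^{c/2} and u^{[1]} has symmetry with type ε z^{c/2−1}. (2) If u has symmetry with type ε z^c and c is odd, then for every l ∈ ℤ, v₁(z) := (u^{[0]}(z) + z^l u^{[1]}(z))/√2 has symmetry with type ε z^{(c−1)/2+l} and v₂(z) := (u^{[0]}(z) − z^l u^{[1]}(z))/√2 has symmetry with type −ε z^{(c−1)/2+l}. (3) If v₁ has symmetry with type ε z^{c+1} and v₂ has symmetry with type ε z^{c}, then u(z) := v₁(z²) + z·v₂(z²) has symmetry with type ε z^{2c+2}. (4) If v₁ has symmetry with type ε z^{c} and v₂ has symmetry with type −ε z^{c}, then for every l ∈ ℤ, u(z) := w₁(z²) + z·w₂(z²), where w₁(z) := (v₁(z)+v₂(z))/√2 and w₂(z) := z^{−l}(v₁(z)−v₂(z))/√2, has symmetry with type ε z^{2(c−l)+1}. -/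

import Mathlib

open LaurentPolynomial Matrix
open scoped Classical

noncomputable section

abbrev LP := LaurentPolynomial ℂ

namespace QT

/-- The coefficient of `z^k` in a Laurent polynomial. -/
def coeff (u : LP) (k : ℤ) : ℂ := (AddMonoidAlgebra.coeff u) k

/-- The Hermitian conjugate `u⋆(z) = Σ conj(u(k)) z^{-k}`. -/
def hstar (u : LP) : LP :=
  AddMonoidAlgebra.ofCoeff (
    Finsupp.mapDomain (fun k => -k)
      (Finsupp.mapRange (starRingEnd ℂ) (map_zero _) (AddMonoidAlgebra.coeff u)))

/-- `u` has symmetry with type `ε z^c`, i.e. `u(k) = ε u(c-k)` for all `k`. -/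
def SymT (u : LP) (ε : ℂ) (c : ℤ) : Prop := ∀ k : ℤ, coeff u k = ε * coeff u (c - k)

def Sgn (ε : ℂ) : Prop := ε = 1 ∨ ε = -1

/-- `u` has symmetry (with some type). -/
def HasSym (u : LP) : Prop := ∃ ε c, Sgn ε ∧ SymT u ε c

/-- The Laurent polynomial `z - a`. -/
def zsub (a : ℂ) : LP := T 1 - LaurentPolynomial.C a

/-- `m` is the multiplicity of `z₀` as a zero of `u`. -/
def mzIs (u : LP) (z₀ : ℂ) (m : ℕ) : Prop := zsub z₀ ^ m ∣ u ∧ ¬ zsub z₀ ^ (m + 1) ∣ u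

/-- The multiplicity of `z₀` as a zero of `u`, as a function. -/
def mzF (u : LP) (z₀ : ℂ) : ℕ := sSup {m : ℕ | zsub z₀ ^ m ∣ u}

/-- The difference-of-(Hermitian)-squares property with respect to symmetry type `ε z^c`. -/
def DOS (u : LP) (ε : ℂ) (c : ℤ) : Prop :=
  ∃ (u₁ u₂ : LP) (ε₁ ε₂ : ℂ) (c₁ c₂ : ℤ),
    Sgn ε₁ ∧ Sgn ε₂ ∧ SymT u₁ ε₁ c₁ ∧ SymT u₂ ε₂ c₂ ∧
    u₁ * hstar u₁ - u₂ * hstar u₂ = u ∧ ε₁ * ε₂ = ε ∧ c₁ - c₂ = c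

/-- Degree: the largest exponent with nonzero coefficient (0 for the zero polynomial). -/
def degL (u : LP) : ℤ :=
  if h : u = 0 then 0
  else (AddMonoidAlgebra.coeff u).support.max' (Finsupp.support_nonempty_iff.mpr (fun h' => h (AddMonoidAlgebra.coeff_injective (by rw [h']; rfl))))

/-- Lower degree: the smallest exponent with nonzero coefficient (0 for zero). -/
def ldegL (u : LP) : ℤ :=
  if h : u = 0 then 0
  else (AddMonoidAlgebra.coeff u).support.min' (Finsupp.support_nonempty_iff.mpr (fun h' => h (AddMonoidAlgebra.coeff_injective (by rw [h']; rfl))))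

/-- Length `deg - ldeg`, with `len 0 = ⊥`. -/
def lenL (u : LP) : WithBot ℤ := if u = 0 then ⊥ else ((degL u - ldegL u : ℤ) : WithBot ℤ)

/-- `g` is a greatest common divisor of `a` and `b`. -/
def IsGCD2 (g a b : LP) : Prop := g ∣ a ∧ g ∣ b ∧ ∀ e : LP, e ∣ a → e ∣ b → e ∣ g

/-- `g` is a greatest common divisor of `a`, `b`, `c`, `d`. -/
def IsGCD4 (g a b c d : LP) : Prop :=
  g ∣ a ∧ g ∣ b ∧ g ∣ c ∧ g ∣ d ∧ ∀ e : LP, e ∣ a → e ∣ b → e ∣ c → e ∣ d → e ∣ g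

/-- The Hermitian conjugate transpose of a matrix of Laurent polynomials. -/
def hstarM (A : Matrix (Fin 2) (Fin 2) LP) : Matrix (Fin 2) (Fin 2) LP :=
  fun i j => hstar (A j i)

def IsHerm (A : Matrix (Fin 2) (Fin 2) LP) : Prop := hstarM A = A

/-- `diag(1, -1)`. -/
def Jmat : Matrix (Fin 2) (Fin 2) LP := Matrix.diagonal ![1, -1]

/-- A square matrix of Laurent polynomials is strongly invertible if its determinant is a
nonzero monomial. -/
def StrongInv (A : Matrix (Fin 2) (Fin 2) LP) : Prop :=
  ∃ (lam : ℂ) (k : ℤ), lam ≠ 0 ∧ A.det = LaurentPolynomial.C lam * T k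

/-- Compatible symmetry for a `2×2` matrix of Laurent polynomials. -/
def CompatSym (A : Matrix (Fin 2) (Fin 2) LP) : Prop :=
  ∃ (ε ε' : Fin 2 → ℂ) (c c' : Fin 2 → ℤ),
    (∀ j, Sgn (ε j)) ∧ (∀ k, Sgn (ε' k)) ∧
    ∀ j k, SymT (A j k) (ε j * ε' k) (c' k - c j)

/-- Substitution `z ↦ z²`. -/
def sqDom (u : LP) : LP :=
  AddMonoidAlgebra.ofCoeff (Finsupp.mapDomain (fun k => 2 * k) (AddMonoidAlgebra.coeff u))

/-- Substitution `z ↦ -z`. -/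
def negSub (u : LP) : LP :=
  (AddMonoidAlgebra.coeff u).sum fun k c => (AddMonoidAlgebra.ofCoeff (Finsupp.single k ((-1 : ℂ) ^ k * c)) : LP)

/-- The `γ`-coset `u^{[γ]}(z) = Σ_k u(γ + 2k) z^k`. -/
def cosetL (u : LP) (γ : ℤ) : LP :=
  AddMonoidAlgebra.ofCoeff (
    Finsupp.comapDomain (fun k : ℤ => γ + 2 * k) (AddMonoidAlgebra.coeff u)
      (by intro a _ b _ h; simp only at h; omega))

/-- Evaluation of a Laurent polynomial at a point. -/
def evalL (u : LP) (z : ℂ) : ℂ := (AddMonoidAlgebra.coeff u).sum fun k c => c * z ^ k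

/-- `{a; b₁, b₂}_{Θ,(1,-1)}` is a quasi-tight framelet filter bank. -/
def QTFB (a Θ b₁ b₂ : LP) : Prop :=
  sqDom Θ * hstar a * a + hstar b₁ * b₁ - hstar b₂ * b₂ = Θ ∧
  sqDom Θ * hstar a * negSub a + hstar b₁ * negSub b₁ - hstar b₂ * negSub b₂ = 0

/-- The matrix `N_{a,Θ|n_b}` built from the quotients `A`, `B`. -/
def Nmat (A B : LP) : Matrix (Fin 2) (Fin 2) LP :=
  LaurentPolynomial.C (2 : ℂ)⁻¹ •
    !![cosetL A 0 + cosetL B 0, cosetL A 1 - cosetL B 1;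
       T 1 * (cosetL A 1 + cosetL B 1), cosetL A 0 - cosetL B 0]

lemma coeff_add (u v : LP) (k : ℤ) : coeff (u+v) k = coeff u k + coeff v k := by
  unfold coeff; rw [AddMonoidAlgebra.coeff_add]; rfl
lemma coeff_sub (u v : LP) (k : ℤ) : coeff (u-v) k = coeff u k - coeff v k := by
  unfold coeff; rw [AddMonoidAlgebra.coeff_sub]; rfl
lemma coeff_single_mul (n : ℤ) (a : ℂ) (u : LP) (k : ℤ) :
    coeff ((AddMonoidAlgebra.single n a : LP) * u) k = a * coeff u (k - n) := by
  unfold coeff; rw [AddMonoidAlgebra.coeff_single_mul_apply, neg_add_eq_sub]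
lemma coeff_C_mul (a : ℂ) (u : LP) (k : ℤ) :
    coeff (LaurentPolynomial.C a * u) k = a * coeff u k := by
  have h : LaurentPolynomial.C a = (AddMonoidAlgebra.single 0 a : LP) := (single_eq_C a).symm
  rw [h, coeff_single_mul]; ring_nf
lemma coeff_T_mul (n : ℤ) (u : LP) (k : ℤ) :
    coeff (T n * u) k = coeff u (k - n) := by
  have h : (T n : LP) = (AddMonoidAlgebra.single n 1 : LP) := rfl
  rw [h, coeff_single_mul, one_mul]
lemma coeff_coset (u : LP) (γ k : ℤ) : coeff (cosetL u γ) k = coeff u (γ + 2*k) := by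
  unfold coeff cosetL; rw [AddMonoidAlgebra.coeff_ofCoeff]; rfl
lemma coeff_sqDom_even (u : LP) (k : ℤ) : coeff (sqDom u) (2*k) = coeff u k := by
  unfold coeff sqDom; rw [AddMonoidAlgebra.coeff_ofCoeff]
  exact Finsupp.mapDomain_apply (fun a b h => by have h' : 2*a = 2*b := h; omega) _ k
lemma coeff_sqDom_odd (u : LP) (k : ℤ) : coeff (sqDom u) (2*k+1) = 0 := by
  unfold coeff sqDom; rw [AddMonoidAlgebra.coeff_ofCoeff]
  exact Finsupp.mapDomain_notin_range _ _ (by rintro ⟨m, hm⟩; have hm' : 2*m = 2*k+1 := hm; omega)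


/-- symmetry properties of coset sequences (Lemma 4.3 of the paper). -/
theorem coset_symmetry_properties (ε : ℂ) (hε : Sgn ε) :
    (∀ (u : LP) (c : ℤ), SymT u ε c → Even c →
      SymT (cosetL u 0) ε (c / 2) ∧ SymT (cosetL u 1) ε (c / 2 - 1)) ∧
    (∀ (u : LP) (c : ℤ), SymT u ε c → Odd c → ∀ l : ℤ,
      SymT (LaurentPolynomial.C ((Real.sqrt 2 : ℂ))⁻¹ * (cosetL u 0 + T l * cosetL u 1))
        ε ((c - 1) / 2 + l) ∧
      SymT (LaurentPolynomial.C ((Real.sqrt 2 : ℂ))⁻¹ * (cosetL u 0 - T l * cosetL u 1))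
        (-ε) ((c - 1) / 2 + l)) ∧
    (∀ (v₁ v₂ : LP) (c : ℤ), SymT v₁ ε (c + 1) → SymT v₂ ε c →
      SymT (sqDom v₁ + T 1 * sqDom v₂) ε (2 * c + 2)) ∧
    (∀ (v₁ v₂ : LP) (c : ℤ), SymT v₁ ε c → SymT v₂ (-ε) c → ∀ l : ℤ,
      SymT (sqDom (LaurentPolynomial.C ((Real.sqrt 2 : ℂ))⁻¹ * (v₁ + v₂)) +
          T 1 * sqDom (LaurentPolynomial.C ((Real.sqrt 2 : ℂ))⁻¹ * (T (-l) * (v₁ - v₂))))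
        ε (2 * (c - l) + 1)) := by
  set s : ℂ := ((Real.sqrt 2 : ℂ))⁻¹ with hs
  refine ⟨?_, ?_, ?_, ?_⟩
  · -- part 1
    intro u c hu hc
    obtain ⟨m, hm⟩ := hc
    have hc2 : c / 2 = m := by omega
    constructor
    · intro k
      rw [coeff_coset, coeff_coset, hu (0 + 2*k), hc2]
      congr 2; omega
    · intro k
      rw [coeff_coset, coeff_coset, hu (1 + 2*k), hc2]
      congr 2; omega
  · -- part 2
    intro u c hu hc l
    obtain ⟨m, hm⟩ := hc
    have hc2 : (c - 1) / 2 = m := by omega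
    rw [hc2]
    have key : ∀ k, coeff u (2*k) = ε * coeff u (1 + 2*(m - k)) := by
      intro k; rw [hu (2*k)]; congr 2; omega
    have key2 : ∀ k, coeff u (1 + 2*(k - l)) = ε * coeff u (2*(m + l - k)) := by
      intro k; rw [hu (1 + 2*(k - l))]; congr 2; omega
    have hε2 : ε * ε = 1 := by rcases hε with h | h <;> simp [h]
    constructor
    · intro k
      rw [coeff_C_mul, coeff_C_mul, coeff_add, coeff_add, coeff_T_mul, coeff_T_mul,
        coeff_coset, coeff_coset, coeff_coset, coeff_coset]
      have e1 := key k
      have e2 := key2 k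
      have e3 : (0 : ℤ) + 2*(m + l - k) = 2*(m + l - k) := by ring
      have e4 : 1 + 2*(m + l - k - l) = 1 + 2*(m - k) := by ring
      rw [show (0:ℤ) + 2*k = 2*k by ring, show 1 + 2*(k - l) = 1 + 2*(k-l) by ring,
        e1, e2, e3, e4]
      ring
    · intro k
      rw [coeff_C_mul, coeff_C_mul, coeff_sub, coeff_sub, coeff_T_mul, coeff_T_mul,
        coeff_coset, coeff_coset, coeff_coset, coeff_coset]
      have e1 := key k
      have e2 := key2 k
      have e3 : (0 : ℤ) + 2*(m + l - k) = 2*(m + l - k) := by ring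
      have e4 : 1 + 2*(m + l - k - l) = 1 + 2*(m - k) := by ring
      rw [show (0:ℤ) + 2*k = 2*k by ring, e1, e2, e3, e4]
      ring
  · -- part 3
    intro v₁ v₂ c h1 h2 k
    rcases Int.even_or_odd k with ⟨j, hj⟩ | ⟨j, hj⟩
    · have hk : k = 2*j := by omega
      have hr : 2*c + 2 - (2*j) = 2*(c + 1 - j) := by omega
      rw [hk, hr, coeff_add, coeff_add, coeff_T_mul, coeff_T_mul, coeff_sqDom_even,
        coeff_sqDom_even, show 2*j - 1 = 2*(j-1)+1 by ring,
        show 2*(c+1-j) - 1 = 2*(c-j)+1 by ring, coeff_sqDom_odd, coeff_sqDom_odd,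
        h1 j, show c + 1 - j = c + 1 - j from rfl]
      ring
    · have hk : k = 2*j+1 := by omega
      have hr : 2*c + 2 - (2*j+1) = 2*(c - j)+1 := by omega
      rw [hk, hr, coeff_add, coeff_add, coeff_T_mul, coeff_T_mul, coeff_sqDom_odd,
        coeff_sqDom_odd, show 2*j + 1 - 1 = 2*j by ring,
        show 2*(c-j) + 1 - 1 = 2*(c-j) by ring, coeff_sqDom_even, coeff_sqDom_even,
        h2 j]
      ring
  · -- part 4
    intro v₁ v₂ c h1 h2 l k
    have w1 : ∀ j, coeff (sqDom (LaurentPolynomial.C s * (v₁ + v₂))) (2*j)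
        = s * (coeff v₁ j + coeff v₂ j) := by
      intro j; rw [coeff_sqDom_even, coeff_C_mul, coeff_add]
    have w1o : ∀ j, coeff (sqDom (LaurentPolynomial.C s * (v₁ + v₂))) (2*j+1) = 0 :=
      fun j => coeff_sqDom_odd _ j
    have w2 : ∀ j, coeff (sqDom (LaurentPolynomial.C s * (T (-l) * (v₁ - v₂)))) (2*j)
        = s * (coeff v₁ (j + l) - coeff v₂ (j + l)) := by
      intro j
      rw [coeff_sqDom_even, coeff_C_mul, coeff_T_mul, sub_neg_eq_add, coeff_sub]
    have w2o : ∀ j, coeff (sqDom (LaurentPolynomial.C s * (T (-l) * (v₁ - v₂)))) (2*j+1) = 0 :=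
      fun j => coeff_sqDom_odd _ j
    rcases Int.even_or_odd k with ⟨j, hj⟩ | ⟨j, hj⟩
    · have hk : k = 2*j := by omega
      have hr : 2*(c - l) + 1 - (2*j) = 2*(c - l - j) + 1 := by omega
      rw [hk, hr, coeff_add, coeff_add, coeff_T_mul, coeff_T_mul,
        show 2*j - 1 = 2*(j-1)+1 by ring,
        show 2*(c - l - j) + 1 - 1 = 2*(c - l - j) by ring,
        w1 j, w2o (j-1), w2 (c - l - j), w1o (c - l - j),
        h1 j, h2 j, show c - l - j + l = c - j by ring]
      ring
    · have hk : k = 2*j+1 := by omega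
      have hr : 2*(c - l) + 1 - (2*j+1) = 2*(c - l - j) := by omega
      rw [hk, hr, coeff_add, coeff_add, coeff_T_mul, coeff_T_mul,
        show 2*j + 1 - 1 = 2*j by ring,
        show 2*(c - l - j) - 1 = 2*(c - l - j - 1)+1 by ring,
        w2 j, coeff_sqDom_odd, w1 (c - l - j), w2o (c - l - j - 1),
        h1 (j + l), h2 (j + l), show c - (j + l) = c - l - j by ring]
      ring

end QT
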